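/- Let a_{22}, a_{23}, a_{32}, a_{33}, a'_{22}, a'_{23}, a'_{32}, a'_{33} be real numbers satisfying the four equations a_{22}a'_{32} − a_{32}a'_{22} = 0, a_{23}a'_{33} − a_{33}a'_{23} = 0, a_{22}a'_{33} − a_{32}a'_{23} = 1, and a_{23}a'_{32} − a_{33}a'_{22} = −1, and suppose the 2×2 matrices B = [[a_{22}, a_{23}],[a_{32}, a_{33}]] and B' = [[a'_{22}, a'_{23}],[a'_{32}, a'_{33}]] are nonsingular. Then there exists λ ≠ 0 such that B = λ·B'. -/

import Mathlib

open Matrix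

/-- Key intermediate step in the proof of Theorem 1 (Equation (6) implies
block proportionality): the four scalar equations together with
nonsingularity of the two 2×2 blocks force `B = λ·B'` for some `λ ≠ 0`. -/
theorem eq6_implies_proportionality
    (a22 a23 a32 a33 a22' a23' a32' a33' : ℝ)
    (h1 : a22 * a32' - a32 * a22' = 0)
    (h2 : a23 * a33' - a33 * a23' = 0)
    (h3 : a22 * a33' - a32 * a23' = 1)
    (h4 : a23 * a32' - a33 * a22' = -1)
    (hB : (!![a22, a23; a32, a33] : Matrix (Fin 2) (Fin 2) ℝ).det ≠ 0)
    (hB' : (!![a22', a23'; a32', a33'] : Matrix (Fin 2) (Fin 2) ℝ).det ≠ 0) :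
    ∃ l : ℝ, l ≠ 0 ∧
      (!![a22, a23; a32, a33] : Matrix (Fin 2) (Fin 2) ℝ) =
        l • !![a22', a23'; a32', a33'] := by
  rw [Matrix.det_fin_two_of] at hB'
  set d : ℝ := a22' * a33' - a23' * a32' with hd
  have e1 : a22 * d = a22' := by linear_combination a22' * h3 - a23' * h1
  have e2 : a32 * d = a32' := by linear_combination a32' * h3 - a33' * h1
  have e3 : a23 * d = a23' := by linear_combination a22' * h2 - a23' * h4
  have e4 : a33 * d = a33' := by linear_combination a32' * h2 - a33' * h4
  refine ⟨1 / d, one_div_ne_zero hB', ?_⟩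
  ext i j
  fin_cases i <;> fin_cases j <;>
    simp only [Matrix.smul_apply, Matrix.cons_val', Matrix.cons_val_zero, Matrix.cons_val_one,
      Matrix.head_cons, Matrix.head_fin_const, Matrix.empty_val', Matrix.cons_val_fin_one,
      smul_eq_mul, Matrix.of_apply, Fin.zero_eta, Fin.mk_one, Fin.isValue] <;>
    field_simp <;> linarith [e1, e2, e3, e4]
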